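/- Let W be a real Hilbert space and let A and B be finite-dimensional subspaces of W. Let u, v ∈ W be such that u is orthogonal to A, u is orthogonal to B, and v is orthogonal to B. Then ‖P_A v‖ ≤ δ(A, B) · ‖v − u‖, where δ(A, B) := sup { ‖x − P_B x‖ : x ∈ A, ‖x‖ = 1 } (with δ(A, B) := 0 if A = {0}) and P_A, P_B denote the orthogonal projections of W onto A and B. -/

import Mathlib

open RealInnerProductSpace


/-- The gap `δ(A, B) = sup { ‖x − P_B x‖ : x ∈ A, ‖x‖ = 1 }` between two
subspaces of a real inner product space (equal to `0` when `A = {0}`, since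
`sSup ∅ = 0` in `ℝ`). -/
noncomputable def subspaceGap {W : Type*} [NormedAddCommGroup W] [InnerProductSpace ℝ W]
    (A B : Submodule ℝ W) [B.HasOrthogonalProjection] : ℝ :=
  sSup {r : ℝ | ∃ x ∈ A, ‖x‖ = 1 ∧ r = ‖x - (B.orthogonalProjectionOnto x : W)‖}

/-- **Hilbert-space content of Lemma 5.6.**
If `A`, `B` are finite-dimensional subspaces of a real Hilbert space `W`,
`u ⟂ A`, `u ⟂ B`, and `v ⟂ B`, then `‖P_A v‖ ≤ δ(A, B) ‖v − u‖`. -/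
theorem norm_proj_le_gap_mul
    {W : Type*} [NormedAddCommGroup W] [InnerProductSpace ℝ W] [CompleteSpace W]
    (A B : Submodule ℝ W) [FiniteDimensional ℝ A] [FiniteDimensional ℝ B]
    (u v : W) (huA : u ∈ Aᗮ) (huB : u ∈ Bᗮ) (hvB : v ∈ Bᗮ) :
    ‖(A.orthogonalProjectionOnto v : W)‖ ≤ subspaceGap A B * ‖v - u‖ := by
  set S := {r : ℝ | ∃ x ∈ A, ‖x‖ = 1 ∧ r = ‖x - (B.orthogonalProjectionOnto x : W)‖} with hS
  have hSnonneg : ∀ r ∈ S, 0 ≤ r := by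
    rintro r ⟨x, -, -, rfl⟩; positivity
  have hSbdd : BddAbove S := by
    refine ⟨2, ?_⟩
    rintro r ⟨x, -, hx1, rfl⟩
    calc ‖x - (B.orthogonalProjectionOnto x : W)‖
        ≤ ‖x‖ + ‖(B.orthogonalProjectionOnto x : W)‖ := norm_sub_le _ _
      _ ≤ ‖x‖ + ‖x‖ := by
          have := Submodule.orthogonalProjectionOnto_norm_le B
          have h2 : ‖(B.orthogonalProjectionOnto x : W)‖ ≤ ‖x‖ := by
            simpa using B.orthogonalProjectionOnto.le_opNorm x |>.trans
              (by nlinarith [norm_nonneg x, B.orthogonalProjectionOnto.le_opNorm x,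
                Submodule.orthogonalProjectionOnto_norm_le B])
          linarith
      _ = 2 := by rw [hx1]; norm_num
  have hgap_nonneg : 0 ≤ subspaceGap A B := Real.sSup_nonneg hSnonneg
  set w : W := (A.orthogonalProjectionOnto v : W) with hw
  by_cases hw0 : w = 0
  · rw [hw0, norm_zero]
    positivity
  -- key inner product identity
  have hwA : w ∈ A := (A.orthogonalProjectionOnto v).2
  have h1 : ⟪v - w, w⟫ = 0 := by
    rw [real_inner_comm]
    exact (Submodule.sub_starProjection_mem_orthogonal (K := A) v) w hwA
  have hvw : ⟪v, w⟫ = ‖w‖ ^ 2 := by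
    have := inner_sub_left (𝕜 := ℝ) v w w
    rw [h1] at this
    have : ⟪v, w⟫ = ⟪w, w⟫ := by linarith
    rw [this, real_inner_self_eq_norm_sq]
  have huw : ⟪u, w⟫ = 0 := by rw [real_inner_comm]; exact huA w hwA
  have hPB : ⟪v - u, (B.orthogonalProjectionOnto w : W)⟫ = 0 := by
    have := Submodule.sub_mem Bᗮ hvB huB
    rw [real_inner_comm]; exact (Submodule.mem_orthogonal _ _).1 this _ (B.orthogonalProjectionOnto w).2
  have key : ‖w‖ ^ 2 = ⟪v - u, w - (B.orthogonalProjectionOnto w : W)⟫ := by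
    rw [inner_sub_right, hPB, inner_sub_left, huw]
    linarith [hvw]
  have hcs : ‖w‖ ^ 2 ≤ ‖v - u‖ * ‖w - (B.orthogonalProjectionOnto w : W)‖ := by
    rw [key]
    exact real_inner_le_norm _ _
  -- bound ‖w - P_B w‖ ≤ δ ‖w‖
  have hwpos : (0 : ℝ) < ‖w‖ := norm_pos_iff.2 hw0
  have hmem : ‖(‖w‖⁻¹ • w) - (B.orthogonalProjectionOnto (‖w‖⁻¹ • w) : W)‖ ∈ S := by
    refine ⟨‖w‖⁻¹ • w, A.smul_mem _ hwA, ?_, rfl⟩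
    rw [norm_smul, norm_inv, norm_norm]
    field_simp
  have hle : ‖(‖w‖⁻¹ • w) - (B.orthogonalProjectionOnto (‖w‖⁻¹ • w) : W)‖ ≤ subspaceGap A B :=
    le_csSup hSbdd hmem
  have hsmul : (‖w‖⁻¹ • w) - (B.orthogonalProjectionOnto (‖w‖⁻¹ • w) : W)
      = ‖w‖⁻¹ • (w - (B.orthogonalProjectionOnto w : W)) := by
    rw [map_smul, smul_sub]
    rfl
  rw [hsmul, norm_smul, norm_inv, norm_norm] at hle
  have hB : ‖w - (B.orthogonalProjectionOnto w : W)‖ ≤ subspaceGap A B * ‖w‖ := by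
    rw [inv_mul_le_iff₀ hwpos] at hle
    linarith [hle]
  have : ‖w‖ ^ 2 ≤ ‖v - u‖ * (subspaceGap A B * ‖w‖) :=
    hcs.trans (by exact mul_le_mul_of_nonneg_left hB (norm_nonneg _))
  nlinarith [hwpos]
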